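/- Let T = (T_{ij}) be an n×n operator matrix with T_{ij} ∈ B(H), and f, g nonnegative continuous functions on [0,∞) with f(t)g(t) = t. Define the n×n matrix T'' with diagonal entries t''_{ii} = (1/2)‖f²(|T_{ii}|) + g²(|T_{ii}*|)‖ and off-diagonal entries t''_{ij} = ‖f²(|T_{ij}|)‖^{1/2} ‖g²(|T_{ij}*|)‖^{1/2}. Then w(T) ≤ w(T''). -/

import Mathlib

set_option maxHeartbeats 1000000


/-- The numerical radius of an operator on a complex Hilbert space. -/
noncomputable def nr {H : Type*} [NormedAddCommGroup H] [InnerProductSpace ℂ H]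
    (T : H →L[ℂ] H) : ℝ :=
  sSup {r : ℝ | ∃ x : H, ‖x‖ = 1 ∧ r = ‖(inner ℂ (T x) x : ℂ)‖}

/-- `|T| = (T*T)^{1/2}` via the continuous functional calculus. -/
noncomputable def absOp {H : Type*} [NormedAddCommGroup H] [InnerProductSpace ℂ H]
    [CompleteSpace H] (X : H →L[ℂ] H) : H →L[ℂ] H :=
  cfc Real.sqrt (star X * X)

section aux
variable {H : Type*} [NormedAddCommGroup H] [InnerProductSpace ℂ H] [CompleteSpace H]

local notation "⟪" x ", " y "⟫" => @inner ℂ _ _ x y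

lemma re_inner_star_mul_self (V : H →L[ℂ] H) (z : H) :
    ((inner ℂ ((star V * V) z) z : ℂ)).re = ‖V z‖ ^ 2 := by
  have : (star V * V) z = ContinuousLinearMap.adjoint V (V z) := by
    rw [ContinuousLinearMap.star_eq_adjoint]; rfl
  rw [this, ContinuousLinearMap.adjoint_inner_left]
  exact_mod_cast inner_self_eq_norm_sq (𝕜 := ℂ) (V z)

lemma inner_cfc_sq (A : H →L[ℂ] H) (hA : IsSelfAdjoint A) (h : ℝ → ℝ) (hh : Continuous h)
    (z : H) : ((inner ℂ (cfc (fun t => h t ^ 2) A z) z : ℂ)).re = ‖cfc h A z‖ ^ 2 := by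
  have h1 : cfc (fun t => h t ^ 2) A = cfc (fun t => h t * h t) A := by
    congr 1; funext t; ring
  have h2 : cfc (fun t => h t * h t) A = cfc h A * cfc h A :=
    cfc_mul h h A hh.continuousOn hh.continuousOn
  have hsa : IsSelfAdjoint (cfc h A) := cfc_predicate h A
  have h3 : cfc h A * cfc h A = star (cfc h A) * cfc h A := by rw [hsa.star_eq]
  rw [h1, h2, h3, re_inner_star_mul_self]

lemma re_inner_cfc_nonneg (A : H →L[ℂ] H) (hA : IsSelfAdjoint A) (k : ℝ → ℝ)
    (hk : Continuous k) (hk0 : ∀ t, 0 ≤ k t) (z : H) :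
    0 ≤ ((inner ℂ (cfc k A z) z : ℂ)).re := by
  have e : cfc k A = cfc (fun t => Real.sqrt (k t) ^ 2) A := by
    congr 1; funext t; rw [Real.sq_sqrt (hk0 t)]
  rw [e, inner_cfc_sq A hA (fun t => Real.sqrt (k t)) (Real.continuous_sqrt.comp hk)]
  positivity

lemma re_inner_cfc_mono (A : H →L[ℂ] H) (hA : IsSelfAdjoint A) (k₁ k₂ : ℝ → ℝ)
    (hk₁ : Continuous k₁) (hk₂ : Continuous k₂) (hle : ∀ t, k₁ t ≤ k₂ t) (z : H) :
    ((inner ℂ (cfc k₁ A z) z : ℂ)).re ≤ ((inner ℂ (cfc k₂ A z) z : ℂ)).re := by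
  have h0 := re_inner_cfc_nonneg A hA (fun t => k₂ t - k₁ t) (hk₂.sub hk₁)
    (fun t => sub_nonneg.mpr (hle t)) z
  rw [cfc_sub (fun t => k₂ t) (fun t => k₁ t) A hk₂.continuousOn hk₁.continuousOn] at h0
  rw [ContinuousLinearMap.sub_apply, inner_sub_left] at h0
  simp only [Complex.sub_re] at h0
  linarith


lemma intertwine (X : H →L[ℂ] H) (φ : ℝ → ℝ) (hφ : Continuous φ) :
    X * cfc φ (star X * X) = cfc φ (X * star X) * X := by
  set A := star X * X with hAdef
  set B := X * star X with hBdef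
  have hA : IsSelfAdjoint A := IsSelfAdjoint.star_mul_self X
  have hB : IsSelfAdjoint B := IsSelfAdjoint.mul_star_self X
  have hpow : ∀ m : ℕ, X * A ^ m = B ^ m * X := by
    intro m
    induction m with
    | zero => simp
    | succ m ih =>
      rw [pow_succ, ← mul_assoc, ih, mul_assoc, pow_succ, mul_assoc]
      exact congrArg _ ((mul_assoc X (star X) X).symm)
  have hpoly : ∀ p : Polynomial ℝ, X * Polynomial.aeval A p = Polynomial.aeval B p * X := by
    intro p
    induction p using Polynomial.induction_on' with
    | add p q hp hq => simp only [map_add, mul_add, add_mul, hp, hq]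
    | monomial m c =>
      simp only [Polynomial.aeval_monomial]
      calc X * (algebraMap ℝ _ c * A ^ m) = algebraMap ℝ _ c * (X * A ^ m) := by
            rw [← mul_assoc, ← Algebra.commutes c X, mul_assoc]
        _ = algebraMap ℝ _ c * (B ^ m * X) := by rw [hpow]
        _ = algebraMap ℝ _ c * B ^ m * X := by rw [mul_assoc]
  -- approximation step
  have key : ∀ δ : ℝ, 0 < δ → ‖X * cfc φ A - cfc φ B * X‖ ≤ δ := by
    intro δ hδ
    have hX1 : (0:ℝ) < 2 * ‖X‖ + 1 := by positivity
    set ε : ℝ := δ / (2 * ‖X‖ + 1) with hεdef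
    have hε : 0 < ε := by positivity
    set R : ℝ := max (‖A‖ * ‖(1 : H →L[ℂ] H)‖) (‖B‖ * ‖(1 : H →L[ℂ] H)‖) with hRdef
    have hσA : spectrum ℝ A ⊆ Set.Icc (-R) R := by
      intro t ht
      have := spectrum.subset_closedBall_norm_mul (𝕜 := ℝ) A ht
      rw [Metric.mem_closedBall, dist_zero_right, Real.norm_eq_abs] at this
      have : |t| ≤ R := this.trans (le_max_left _ _)
      exact abs_le.mp this
    have hσB : spectrum ℝ B ⊆ Set.Icc (-R) R := by
      intro t ht
      have := spectrum.subset_closedBall_norm_mul (𝕜 := ℝ) B ht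
      rw [Metric.mem_closedBall, dist_zero_right, Real.norm_eq_abs] at this
      have : |t| ≤ R := this.trans (le_max_right _ _)
      exact abs_le.mp this
    obtain ⟨p, hp⟩ := exists_polynomial_near_of_continuousOn (-R) R φ hφ.continuousOn ε hε
    have hnA : ‖cfc φ A - cfc p.eval A‖ ≤ ε := by
      rw [← cfc_sub φ p.eval A hφ.continuousOn p.continuous.continuousOn]
      refine norm_cfc_le hε.le fun t ht => ?_
      rw [Real.norm_eq_abs, abs_sub_comm]
      exact (hp t (hσA ht)).le
    have hnB : ‖cfc φ B - cfc p.eval B‖ ≤ ε := by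
      rw [← cfc_sub φ p.eval B hφ.continuousOn p.continuous.continuousOn]
      refine norm_cfc_le hε.le fun t ht => ?_
      rw [Real.norm_eq_abs, abs_sub_comm]
      exact (hp t (hσB ht)).le
    have hPA : cfc p.eval A = Polynomial.aeval A p := cfc_polynomial p A
    have hPB : cfc p.eval B = Polynomial.aeval B p := cfc_polynomial p B
    have hsplit : X * cfc φ A - cfc φ B * X =
        X * (cfc φ A - cfc p.eval A) + (cfc p.eval B - cfc φ B) * X := by
      rw [hPA, hPB]
      rw [show X * (cfc φ A - Polynomial.aeval A p) + (Polynomial.aeval B p - cfc φ B) * X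
          = X * cfc φ A - cfc φ B * X
            - (X * Polynomial.aeval A p - Polynomial.aeval B p * X) by noncomm_ring,
        hpoly p]
      simp
    calc ‖X * cfc φ A - cfc φ B * X‖
        ≤ ‖X * (cfc φ A - cfc p.eval A)‖ + ‖(cfc p.eval B - cfc φ B) * X‖ := by
          rw [hsplit]; exact norm_add_le _ _
      _ ≤ ‖X‖ * ε + ε * ‖X‖ := by
          gcongr
          · exact (norm_mul_le _ _).trans (by gcongr)
          · refine (norm_mul_le _ _).trans ?_
            have : ‖cfc p.eval B - cfc φ B‖ ≤ ε := by rwa [norm_sub_rev]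
            gcongr
      _ ≤ δ := by
          have h2 : ‖X‖ * ε + ε * ‖X‖ = ε * (2 * ‖X‖) := by ring
          rw [h2, hεdef, div_mul_eq_mul_div, div_le_iff₀ hX1]
          nlinarith [norm_nonneg X, hδ.le]
  have : ‖X * cfc φ A - cfc φ B * X‖ ≤ 0 := le_of_forall_gt_imp_ge_of_dense (by
    intro δ hδ; exact (key δ hδ))
  have := le_antisymm this (norm_nonneg _)
  rwa [norm_eq_zero, sub_eq_zero] at this

lemma mixed_schwarz (X : H →L[ℂ] H) (f g : ℝ → ℝ) (hf : Continuous f) (hg : Continuous g)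
    (hfg : ∀ t, 0 ≤ t → f t * g t = t) (x y : H) :
    ‖(inner ℂ (X x) y : ℂ)‖ ≤
      Real.sqrt ((inner ℂ (cfc (fun t => f t ^ 2) (absOp X) x) x : ℂ)).re *
      Real.sqrt ((inner ℂ (cfc (fun t => g t ^ 2) (absOp (star X)) y) y : ℂ)).re := by
  set A := star X * X with hAdef
  set B := X * star X with hBdef
  have hA : IsSelfAdjoint A := IsSelfAdjoint.star_mul_self X
  have hB : IsSelfAdjoint B := IsSelfAdjoint.mul_star_self X
  have hfc : Continuous (fun t => f (Real.sqrt t)) := hf.comp Real.continuous_sqrt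
  have hgc : Continuous (fun t => g (Real.sqrt t)) := hg.comp Real.continuous_sqrt
  have hPA : cfc (fun t => f t ^ 2) (absOp X) = cfc (fun t => f (Real.sqrt t) ^ 2) A := by
    rw [show absOp X = cfc Real.sqrt A from rfl,
      ← cfc_comp (fun t => f t ^ 2) Real.sqrt A hA ((hf.pow 2).continuousOn)
        Real.continuous_sqrt.continuousOn]
    rfl
  have hPB : cfc (fun t => g t ^ 2) (absOp (star X)) = cfc (fun t => g (Real.sqrt t) ^ 2) B := by
    rw [show absOp (star X) = cfc Real.sqrt B by rw [absOp, star_star],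
      ← cfc_comp (fun t => g t ^ 2) Real.sqrt B hB ((hg.pow 2).continuousOn)
        Real.continuous_sqrt.continuousOn]
    rfl
  set F := cfc (fun t => f (Real.sqrt t)) A with hFdef
  set G := cfc (fun t => g (Real.sqrt t)) A with hGdef
  set G' := cfc (fun t => g (Real.sqrt t)) B with hG'def
  rw [hPA, hPB, inner_cfc_sq A hA (fun t => f (Real.sqrt t)) hfc x,
    inner_cfc_sq B hB (fun t => g (Real.sqrt t)) hgc y,
    Real.sqrt_sq (norm_nonneg _), Real.sqrt_sq (norm_nonneg _)]
  -- goal : ‖⟪Xx,y⟫‖ ≤ ‖F x‖ * ‖G' y‖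
  refine le_of_forall_pos_le_add fun ε hε => ?_
  have hd1 : (0:ℝ) < ‖x‖ * ‖y‖ + 1 := by positivity
  set δ : ℝ := ε / (‖x‖ * ‖y‖ + 1) with hδdef
  have hδ : 0 < δ := by positivity
  set r : ℝ → ℝ := fun t => (Real.sqrt t + δ)⁻¹ with hrdef
  have hrc : Continuous r := by
    refine (Real.continuous_sqrt.add continuous_const).inv₀ fun t => ?_
    exact ne_of_gt (add_pos_of_nonneg_of_pos (Real.sqrt_nonneg t) hδ)
  set U := X * cfc r A with hUdef
  have hrsq : ∀ t : ℝ, r t ^ 2 * t ≤ 1 := by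
    intro t
    have h1 : 0 < Real.sqrt t + δ := by have := Real.sqrt_nonneg t; positivity
    have h2 : t ≤ (Real.sqrt t + δ) ^ 2 := by
      rcases le_or_gt t 0 with h | h
      · nlinarith
      · nlinarith [Real.sq_sqrt h.le, Real.sqrt_nonneg t]
    calc r t ^ 2 * t ≤ r t ^ 2 * (Real.sqrt t + δ) ^ 2 :=
          mul_le_mul_of_nonneg_left h2 (sq_nonneg _)
      _ = ((Real.sqrt t + δ)⁻¹ * (Real.sqrt t + δ)) ^ 2 := by rw [hrdef]; ring
      _ = 1 := by rw [inv_mul_cancel₀ h1.ne']; norm_num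
  have hXeq : X = U * G * F + δ • U := by
    have h1 : cfc r A * cfc (fun t => Real.sqrt t + δ) A = 1 := by
      rw [← cfc_mul r (fun t => Real.sqrt t + δ) A hrc.continuousOn
        (Real.continuous_sqrt.add continuous_const).continuousOn]
      have he : (fun t => r t * (Real.sqrt t + δ)) = fun _ => (1:ℝ) := by
        funext t
        have h1 : 0 < Real.sqrt t + δ := by have := Real.sqrt_nonneg t; positivity
        rw [hrdef]
        exact inv_mul_cancel₀ h1.ne'
      rw [he, cfc_const_one ℝ A hA]
    have h2 : cfc (fun t => Real.sqrt t + δ) A = G * F + algebraMap ℝ _ δ := by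
      have he : (fun t => Real.sqrt t + δ)
          = fun t => g (Real.sqrt t) * f (Real.sqrt t) + δ := by
        funext t
        rw [mul_comm, hfg (Real.sqrt t) (Real.sqrt_nonneg t)]
      rw [he, cfc_add (a := A) (fun t => g (Real.sqrt t) * f (Real.sqrt t)) (fun _ => δ) ((hgc.mul hfc).continuousOn) continuous_const.continuousOn,
        cfc_mul (fun t => g (Real.sqrt t)) (fun t => f (Real.sqrt t)) A hgc.continuousOn hfc.continuousOn, cfc_const δ A hA]
    calc X = X * (cfc r A * cfc (fun t => Real.sqrt t + δ) A) := by rw [h1, mul_one]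
      _ = U * cfc (fun t => Real.sqrt t + δ) A := by rw [hUdef, mul_assoc]
      _ = U * (G * F) + U * algebraMap ℝ _ δ := by rw [h2, mul_add]
      _ = U * G * F + δ • U := by
          rw [← mul_assoc, Algebra.algebraMap_eq_smul_one, mul_smul_comm, mul_one]
  -- contraction bound for U
  have hUx : ‖U x‖ ≤ ‖x‖ := by
    have e1 : star U * U = cfc (fun t => r t * (t * r t)) A := by
      have hsU : star U = cfc r A * star X := by
        rw [hUdef, star_mul, (cfc_predicate r A).star_eq]
      rw [hsU, hUdef]
      calc cfc r A * star X * (X * cfc r A) = cfc r A * (A * cfc r A) := by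
            rw [hAdef]; noncomm_ring
        _ = cfc r A * (cfc (fun t : ℝ => t) A * cfc r A) := by rw [cfc_id' ℝ A hA]
        _ = cfc (fun t => r t * (t * r t)) A := by
            rw [← cfc_mul (fun t : ℝ => t) r A (continuous_id.continuousOn) hrc.continuousOn,
              ← cfc_mul r (fun t => t * r t) A hrc.continuousOn
                ((continuous_id.mul hrc).continuousOn)]
    have e2 := re_inner_star_mul_self U x
    rw [e1] at e2
    have e3 := re_inner_cfc_mono A hA (fun t => r t * (t * r t)) (fun _ => 1)
      (hrc.mul (continuous_id'.mul hrc)) continuous_const (fun t => by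
        calc r t * (t * r t) = r t ^ 2 * t := by ring
          _ ≤ 1 := hrsq t) x
    rw [cfc_const_one ℝ A hA] at e3
    simp only [ContinuousLinearMap.one_apply] at e3
    rw [e2] at e3
    have e4 : ((inner ℂ x x : ℂ)).re = ‖x‖ ^ 2 := by
      exact_mod_cast inner_self_eq_norm_sq (𝕜 := ℂ) x
    rw [e4] at e3
    nlinarith [norm_nonneg (U x), norm_nonneg x]
  -- bound for adjoint (U * G) y
  have hadj : ‖ContinuousLinearMap.adjoint (U * G) y‖ ≤ ‖G' y‖ := by
    set V := U * G with hVdef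
    have hsU : star U = cfc r A * star X := by
      rw [hUdef, star_mul, (cfc_predicate r A).star_eq]
    set w : ℝ → ℝ := fun t => r t * g (Real.sqrt t) * (g (Real.sqrt t) * r t) with hwdef
    have hwc : Continuous w := (hrc.mul hgc).mul (hgc.mul hrc)
    have e1 : V * star V = cfc (fun t => w t * t) B := by
      have hsV : star V = G * (cfc r A * star X) := by
        rw [hVdef, star_mul, (cfc_predicate (fun t => g (Real.sqrt t)) A).star_eq, hsU]
      have hcomb : cfc r A * G * (G * cfc r A) = cfc w A := by
        rw [hwdef, ← cfc_mul _ _ A hgc.continuousOn hrc.continuousOn,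
          ← cfc_mul _ _ A hrc.continuousOn hgc.continuousOn,
          ← cfc_mul (fun t => r t * g (Real.sqrt t)) (fun t => g (Real.sqrt t) * r t) A (hrc.mul hgc).continuousOn (hgc.mul hrc).continuousOn]
      have assoc1 : V * star V = X * (cfc r A * G * (G * cfc r A)) * star X := by
        rw [hsV, hVdef, hUdef]; noncomm_ring
      rw [assoc1, hcomb, intertwine X w hwc, hBdef]
      calc cfc w (X * star X) * X * star X = cfc w (X * star X) * (X * star X) := by
            rw [mul_assoc]
        _ = cfc w (X * star X) * cfc (fun t : ℝ => t) (X * star X) := by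
            rw [cfc_id' ℝ (X * star X) (IsSelfAdjoint.mul_star_self X)]
        _ = cfc (fun t => w t * t) (X * star X) := by
            rw [← cfc_mul w (fun t : ℝ => t) (X * star X) hwc.continuousOn
              continuous_id.continuousOn]
    have e2 := re_inner_star_mul_self (star V) y
    rw [star_star] at e2
    have e3 := re_inner_cfc_mono B hB (fun t => w t * t) (fun t => g (Real.sqrt t) ^ 2)
      (hwc.mul continuous_id') (hgc.pow 2) (fun t => by
        have h1 := hrsq t
        show w t * t ≤ g (Real.sqrt t) ^ 2
        have h2 : w t * t = g (Real.sqrt t) ^ 2 * (r t ^ 2 * t) := by rw [hwdef]; ring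
        rw [h2]
        nlinarith [sq_nonneg (g (Real.sqrt t))]) y
    rw [← e1] at e3
    rw [e2] at e3
    have e5 : ((inner ℂ (cfc (fun t => g (Real.sqrt t) ^ 2) B y) y : ℂ)).re = ‖G' y‖ ^ 2 :=
      inner_cfc_sq B hB _ hgc y
    rw [e5] at e3
    have := ContinuousLinearMap.star_eq_adjoint (𝕜 := ℂ) V
    rw [← this]
    nlinarith [norm_nonneg ((star V) y), norm_nonneg (G' y)]
  -- main estimate
  have hmain : ‖(inner ℂ (X x) y : ℂ)‖ ≤ ‖F x‖ * ‖G' y‖ + δ * (‖x‖ * ‖y‖) := by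
    have happ : X x = (U * G) (F x) + (δ • U) x := by
      conv_lhs => rw [hXeq]
      rw [ContinuousLinearMap.add_apply, ContinuousLinearMap.mul_apply]
    rw [happ, inner_add_left]
    calc ‖(inner ℂ ((U * G) (F x)) y : ℂ) + (inner ℂ ((δ • U) x) y : ℂ)‖
        ≤ ‖(inner ℂ ((U * G) (F x)) y : ℂ)‖ + ‖(inner ℂ ((δ • U) x) y : ℂ)‖ := norm_add_le _ _
      _ ≤ ‖F x‖ * ‖G' y‖ + δ * (‖x‖ * ‖y‖) := by
          gcongr
          · have : (inner ℂ ((U * G) (F x)) y : ℂ)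
                = inner ℂ (F x) (ContinuousLinearMap.adjoint (U * G) y) :=
              (ContinuousLinearMap.adjoint_inner_right _ _ _).symm
            rw [this]
            exact (norm_inner_le_norm _ _).trans
              (mul_le_mul_of_nonneg_left hadj (norm_nonneg _))
          · refine (norm_inner_le_norm _ _).trans ?_
            have : ‖(δ • U) x‖ = δ * ‖U x‖ := by
              rw [ContinuousLinearMap.smul_apply, norm_smul, Real.norm_eq_abs,
                abs_of_pos hδ]
            rw [this, mul_assoc]
            exact mul_le_mul_of_nonneg_left
              (mul_le_mul_of_nonneg_right hUx (norm_nonneg y)) hδ.le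
  refine hmain.trans ?_
  gcongr
  rw [hδdef, div_mul_eq_mul_div, div_le_iff₀ hd1]
  nlinarith [hε.le, mul_nonneg (norm_nonneg x) (norm_nonneg y)]

lemma re_le_norm_mul (W : H →L[ℂ] H) (u : H) :
    ((inner ℂ (W u) u : ℂ)).re ≤ ‖W‖ * (‖u‖ * ‖u‖) := by
  calc ((inner ℂ (W u) u : ℂ)).re ≤ ‖(inner ℂ (W u) u : ℂ)‖ := Complex.re_le_norm _
    _ ≤ ‖W u‖ * ‖u‖ := norm_inner_le_norm _ _
    _ ≤ ‖W‖ * ‖u‖ * ‖u‖ := by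
        gcongr
        exact W.le_opNorm u
    _ = ‖W‖ * (‖u‖ * ‖u‖) := by ring

lemma offdiag_bound (X : H →L[ℂ] H) (f g : ℝ → ℝ) (hf : Continuous f) (hg : Continuous g)
    (hfg : ∀ t, 0 ≤ t → f t * g t = t) (u v : H) :
    ‖(inner ℂ (X u) v : ℂ)‖ ≤
      Real.sqrt ‖cfc (fun t => f t ^ 2) (absOp X)‖ *
        Real.sqrt ‖cfc (fun t => g t ^ 2) (absOp (star X))‖ * (‖u‖ * ‖v‖) := by
  refine (mixed_schwarz X f g hf hg hfg u v).trans ?_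
  set P := cfc (fun t => f t ^ 2) (absOp X)
  set Q := cfc (fun t => g t ^ 2) (absOp (star X))
  have h1 : Real.sqrt ((inner ℂ (P u) u : ℂ)).re ≤ Real.sqrt ‖P‖ * ‖u‖ := by
    refine (Real.sqrt_le_sqrt (re_le_norm_mul P u)).trans ?_
    rw [show ‖u‖ * ‖u‖ = ‖u‖ ^ 2 by ring, Real.sqrt_mul (norm_nonneg P),
      Real.sqrt_sq (norm_nonneg u)]
  have h2 : Real.sqrt ((inner ℂ (Q v) v : ℂ)).re ≤ Real.sqrt ‖Q‖ * ‖v‖ := by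
    refine (Real.sqrt_le_sqrt (re_le_norm_mul Q v)).trans ?_
    rw [show ‖v‖ * ‖v‖ = ‖v‖ ^ 2 by ring, Real.sqrt_mul (norm_nonneg Q),
      Real.sqrt_sq (norm_nonneg v)]
  calc Real.sqrt ((inner ℂ (P u) u : ℂ)).re * Real.sqrt ((inner ℂ (Q v) v : ℂ)).re
      ≤ (Real.sqrt ‖P‖ * ‖u‖) * (Real.sqrt ‖Q‖ * ‖v‖) :=
        mul_le_mul h1 h2 (Real.sqrt_nonneg _)
          (mul_nonneg (Real.sqrt_nonneg _) (norm_nonneg _))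
    _ = Real.sqrt ‖P‖ * Real.sqrt ‖Q‖ * (‖u‖ * ‖v‖) := by ring

lemma diag_bound (X : H →L[ℂ] H) (f g : ℝ → ℝ) (hf : Continuous f) (hg : Continuous g)
    (hfg : ∀ t, 0 ≤ t → f t * g t = t) (u : H) :
    ‖(inner ℂ (X u) u : ℂ)‖ ≤
      1/2 * ‖cfc (fun t => f t ^ 2) (absOp X) +
        cfc (fun t => g t ^ 2) (absOp (star X))‖ * (‖u‖ * ‖u‖) := by
  refine (mixed_schwarz X f g hf hg hfg u u).trans ?_
  set P := cfc (fun t => f t ^ 2) (absOp X) with hPdef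
  set Q := cfc (fun t => g t ^ 2) (absOp (star X)) with hQdef
  set a := ((inner ℂ (P u) u : ℂ)).re with hadef
  set b := ((inner ℂ (Q u) u : ℂ)).re with hbdef
  have ha : 0 ≤ a := by
    rw [hadef, hPdef]
    exact re_inner_cfc_nonneg (absOp X) (cfc_predicate Real.sqrt _)
      (fun t => f t ^ 2) (hf.pow 2) (fun t => sq_nonneg _) u
  have hb : 0 ≤ b := by
    rw [hbdef, hQdef]
    exact re_inner_cfc_nonneg (absOp (star X)) (cfc_predicate Real.sqrt _)
      (fun t => g t ^ 2) (hg.pow 2) (fun t => sq_nonneg _) u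
  have hab : Real.sqrt a * Real.sqrt b ≤ (a + b) / 2 := by
    nlinarith [Real.sq_sqrt ha, Real.sq_sqrt hb, sq_nonneg (Real.sqrt a - Real.sqrt b),
      Real.sqrt_nonneg a, Real.sqrt_nonneg b]
  refine hab.trans ?_
  have hsum : a + b = ((inner ℂ ((P + Q) u) u : ℂ)).re := by
    rw [ContinuousLinearMap.add_apply, inner_add_left, Complex.add_re]
  rw [hsum]
  have := re_le_norm_mul (P + Q) u
  linarith

lemma nr_bddAbove {H' : Type*} [NormedAddCommGroup H'] [InnerProductSpace ℂ H']
    (S : H' →L[ℂ] H') :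
    BddAbove {r : ℝ | ∃ x : H', ‖x‖ = 1 ∧ r = ‖(inner ℂ (S x) x : ℂ)‖} := by
  refine ⟨‖S‖, ?_⟩
  rintro r ⟨x, hx, rfl⟩
  calc ‖(inner ℂ (S x) x : ℂ)‖ ≤ ‖S x‖ * ‖x‖ := norm_inner_le_norm _ _
    _ ≤ ‖S‖ * ‖x‖ * ‖x‖ := by gcongr; exact S.le_opNorm x
    _ = ‖S‖ := by rw [hx]; ring

end aux

/-- If `T` is the `n × n` operator matrix with entries `M i j` acting on `⊕ⁿ H`, and
`f, g ≥ 0` continuous with `f(t)g(t) = t` on `[0,∞)`, then `w(T) ≤ w(T'')` with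
`t''_{ii} = (1/2)‖f²(|M i i|) + g²(|M i i*|)‖` and
`t''_{ij} = ‖f²(|M i j|)‖^{1/2} ‖g²(|M i j*|)‖^{1/2}` for `i ≠ j`. -/
theorem nr_opMatrix_le' (n : ℕ) {H : Type*} [NormedAddCommGroup H]
    [InnerProductSpace ℂ H] [CompleteSpace H]
    (M : Fin n → Fin n → (H →L[ℂ] H))
    (T : (PiLp 2 fun _ : Fin n => H) →L[ℂ] (PiLp 2 fun _ : Fin n => H))
    (hT : ∀ x, ∀ i, T x i = ∑ j, M i j (x j))
    (f g : ℝ → ℝ) (hf : Continuous f) (hg : Continuous g)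
    (hf0 : ∀ t, 0 ≤ t → 0 ≤ f t) (hg0 : ∀ t, 0 ≤ t → 0 ≤ g t)
    (hfg : ∀ t, 0 ≤ t → f t * g t = t) :
    nr T ≤ nr (Matrix.toEuclideanCLM (𝕜 := ℂ) (Matrix.of fun i j =>
      if i = j then
        (((1/2) * ‖cfc (fun t => f t ^ 2) (absOp (M i j)) +
            cfc (fun t => g t ^ 2) (absOp (star (M i j)))‖ : ℝ) : ℂ)
      else
        ((Real.sqrt ‖cfc (fun t => f t ^ 2) (absOp (M i j))‖ *
          Real.sqrt ‖cfc (fun t => g t ^ 2) (absOp (star (M i j)))‖ : ℝ) : ℂ))) := by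
  classical
  set BigMat : Matrix (Fin n) (Fin n) ℂ := Matrix.of fun i j =>
      if i = j then
        (((1/2) * ‖cfc (fun t => f t ^ 2) (absOp (M i j)) +
            cfc (fun t => g t ^ 2) (absOp (star (M i j)))‖ : ℝ) : ℂ)
      else
        ((Real.sqrt ‖cfc (fun t => f t ^ 2) (absOp (M i j))‖ *
          Real.sqrt ‖cfc (fun t => g t ^ 2) (absOp (star (M i j)))‖ : ℝ) : ℂ)
    with hBigMat
  set c : Fin n → Fin n → ℝ := fun i j =>
    if i = j then
      1/2 * ‖cfc (fun t => f t ^ 2) (absOp (M i j)) +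
          cfc (fun t => g t ^ 2) (absOp (star (M i j)))‖
    else
      Real.sqrt ‖cfc (fun t => f t ^ 2) (absOp (M i j))‖ *
        Real.sqrt ‖cfc (fun t => g t ^ 2) (absOp (star (M i j)))‖
    with hcdef
  have hc0 : ∀ i j, 0 ≤ c i j := by
    intro i j
    rw [hcdef]
    dsimp only
    split
    · positivity
    · positivity
  have hentry : ∀ i j, BigMat i j = ((c i j : ℝ) : ℂ) := by
    intro i j
    rw [hBigMat, hcdef]
    simp only [Matrix.of_apply]
    split <;> push_cast <;> ring
  rw [nr]
  refine Real.sSup_le ?_ ?_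
  swap
  · refine Real.sSup_nonneg ?_
    rintro r ⟨x, hx, rfl⟩
    exact norm_nonneg _
  rintro r ⟨x, hx, rfl⟩
  have hdiag : ∀ i (u : H), ‖(inner ℂ (M i i u) u : ℂ)‖ ≤ c i i * (‖u‖ * ‖u‖) := by
    intro i u
    have h := diag_bound (M i i) f g hf hg hfg u
    rw [hcdef]
    dsimp only
    rw [if_pos rfl]
    exact h
  have hoff : ∀ i j, i ≠ j → ∀ (u v : H), ‖(inner ℂ (M i j u) v : ℂ)‖ ≤ c i j * (‖u‖ * ‖v‖) := by
    intro i j hij u v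
    have h := offdiag_bound (M i j) f g hf hg hfg u v
    rw [hcdef]
    dsimp only
    rw [if_neg hij]
    exact h
  set y : EuclideanSpace ℂ (Fin n) := (WithLp.equiv 2 (Fin n → ℂ)).symm
      (fun i => (‖x i‖ : ℂ)) with hydef
  have hyi : ∀ i, y i = (‖x i‖ : ℂ) := fun i => rfl
  have hy : ‖y‖ = 1 := by
    rw [EuclideanSpace.norm_eq, ← hx, PiLp.norm_eq_of_L2]
    congr 1
    refine Finset.sum_congr rfl fun i _ => ?_
    rw [hyi i]
    simp
  set Sd : ℝ := ∑ i, ∑ j, c i j * (‖x j‖ * ‖x i‖) with hSdef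
  have hSd0 : 0 ≤ Sd := by
    refine Finset.sum_nonneg fun i _ => Finset.sum_nonneg fun j _ => ?_
    exact mul_nonneg (hc0 i j) (mul_nonneg (norm_nonneg _) (norm_nonneg _))
  have hr : ‖(inner ℂ (T x) x : ℂ)‖ ≤ Sd := by
    have hTx : (inner ℂ (T x) x : ℂ) = ∑ i, ∑ j, (inner ℂ (M i j (x j)) (x i) : ℂ) := by
      rw [PiLp.inner_apply]
      refine Finset.sum_congr rfl fun i _ => ?_
      rw [hT x i, sum_inner]
    rw [hTx, hSdef]
    refine (norm_sum_le _ _).trans ?_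
    refine Finset.sum_le_sum fun i _ => (norm_sum_le _ _).trans ?_
    refine Finset.sum_le_sum fun j _ => ?_
    rcases eq_or_ne i j with h | h
    · subst h
      exact hdiag i (x i)
    · exact hoff i j h (x j) (x i)
  have happly : ∀ i, (Matrix.toEuclideanCLM (𝕜 := ℂ) BigMat y) i = ∑ j, BigMat i j * y j := by
    intro i
    have h := congrFun (Matrix.ofLp_toEuclideanCLM (𝕜 := ℂ) BigMat y) i
    simpa [Matrix.toLin'_apply, Matrix.mulVec, dotProduct] using h
  have hTy : (inner ℂ (Matrix.toEuclideanCLM (𝕜 := ℂ) BigMat y) y : ℂ) = ((Sd : ℝ) : ℂ) := by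
    rw [PiLp.inner_apply, hSdef]
    push_cast
    refine Finset.sum_congr rfl fun i _ => ?_
    rw [happly i, RCLike.inner_apply, hyi i, map_sum, Finset.mul_sum]
    refine Finset.sum_congr rfl fun j _ => ?_
    rw [hentry i j, hyi j, ← Complex.ofReal_mul, Complex.conj_ofReal]
    push_cast
    ring
  calc ‖(inner ℂ (T x) x : ℂ)‖ ≤ Sd := hr
    _ = ‖(inner ℂ (Matrix.toEuclideanCLM (𝕜 := ℂ) BigMat y) y : ℂ)‖ := by
        rw [hTy, Complex.norm_real, Real.norm_eq_abs, abs_of_nonneg hSd0]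
    _ ≤ nr (Matrix.toEuclideanCLM (𝕜 := ℂ) BigMat) :=
        le_csSup (nr_bddAbove _) ⟨y, hy, rfl⟩
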